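/- Assume the value semigroup Γ = ν(R \ {0}) is symmetric, i.e. c = 2δ. Let 𝓜 ⊆ O^{rk} be a standard R-submodule, set dev(𝓜) = rk·δ − dim_k(O^{rk}/𝓜), and let C(𝓜) = {y ∈ 𝓜 : O·y ⊆ 𝓜} be its conductor. Suppose (ε'_0, …, ε'_{rk−1}) is an O-basis of O^{rk} and n_0 ≤ n_1 ≤ … ≤ n_{rk−1} are natural numbers with C(𝓜) = ⊕_{i} z^{n_i}·O·ε'_i. Then rk·c ≥ dev(𝓜) + Σ_{i=0}^{rk−1} n_i, and moreover n_i ≤ c for every i. -/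

import Mathlib

open PowerSeries

/-- `ν f = n` : the order of the power series `f` equals `n`. -/
def HasOrd {k : Type*} [Semiring k] (f : PowerSeries k) (n : ℕ) : Prop :=
  PowerSeries.coeff n f ≠ 0 ∧ ∀ m < n, PowerSeries.coeff m f = 0

/-- The set of orders of the nonzero elements of `S ⊆ k[[z]]`. -/
def ValSet {k : Type*} [Semiring k] (S : Set (PowerSeries k)) : Set ℕ :=
  {n | ∃ f ∈ S, HasOrd f n}

section AuxLemmas

variable {k : Type*} [Field k]

lemma valset_of_pow_mem (R : Subalgebra k (PowerSeries k)) {m t : ℕ}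
    (hRm : ∀ f : PowerSeries k, PowerSeries.X ^ m * f ∈ R) (hmt : m ≤ t) :
    t ∈ ValSet (R : Set (PowerSeries k)) := by
  refine ⟨X ^ t, ?_, ?_, ?_⟩
  · have := hRm (X ^ (t - m))
    rwa [← pow_add, Nat.add_sub_cancel' hmt] at this
  · simp [PowerSeries.coeff_X_pow]
  · intro j hj
    simp [PowerSeries.coeff_X_pow, hj.ne]

lemma conductor_pow_mul_mem (R : Subalgebra k (PowerSeries k)) {c₀ : ℕ}
    (hc₀ : ∀ n', c₀ ≤ n' → n' ∈ ValSet (R : Set (PowerSeries k)))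
    {m : ℕ} (hcm : c₀ ≤ m)
    (hRm : ∀ f : PowerSeries k, PowerSeries.X ^ m * f ∈ R) :
    ∀ f : PowerSeries k, PowerSeries.X ^ c₀ * f ∈ R := by
  suffices h : ∀ d t, c₀ ≤ t → m ≤ t + d → ∀ f : PowerSeries k, X ^ t * f ∈ R by
    exact h m c₀ le_rfl (by omega)
  intro d
  induction d with
  | zero =>
    intro t hct hmt f
    have := hRm (X ^ (t - m) * f)
    rwa [← mul_assoc, ← pow_add, Nat.add_sub_cancel' (by omega)] at this
  | succ d ih =>
    intro t hct hmt f
    by_cases hmtd : m ≤ t + d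
    · exact ih t hct hmtd f
    obtain ⟨r, hrR, hra, hrb⟩ := hc₀ t hct
    set a : k := PowerSeries.coeff t r with ha
    set lam : k := PowerSeries.coeff 0 f * a⁻¹ with hlam
    have hdvd : (X : PowerSeries k) ^ (t + 1) ∣ (X ^ t * f - C lam * r) := by
      rw [PowerSeries.X_pow_dvd_iff]
      intro j hj
      rcases lt_or_eq_of_le (Nat.lt_succ_iff.mp hj) with hjt | hjt
      · rw [map_sub]
        have h1 : PowerSeries.coeff j (X ^ t * f) = 0 := by
          have : (X : PowerSeries k) ^ t ∣ X ^ t * f := dvd_mul_right _ _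
          exact (PowerSeries.X_pow_dvd_iff.mp this) j hjt
        rw [h1, PowerSeries.coeff_C_mul, hrb j hjt, mul_zero, sub_zero]
      · subst hjt
        rw [map_sub, PowerSeries.coeff_C_mul]
        have h1 : PowerSeries.coeff j (X ^ j * f) = PowerSeries.coeff 0 f := by
          simpa using PowerSeries.coeff_X_pow_mul f j 0
        rw [h1, ← ha, hlam]
        field_simp
        simp
    obtain ⟨g, hg⟩ := hdvd
    have hexp : (X : PowerSeries k) ^ t * f = C lam * r + X ^ (t + 1) * g := by
      rw [← hg]; ring
    rw [hexp]
    exact add_mem (R.mul_mem (R.algebraMap_mem lam) hrR)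
      (ih (t + 1) (by omega) (by omega) g)


lemma key_claim (R : Subalgebra k (PowerSeries k)) (rk : ℕ)
    (𝓝 : Submodule k (Fin rk → PowerSeries k))
    (hstabN : ∀ r ∈ R, ∀ a ∈ 𝓝, r • a ∈ 𝓝)
    (n : Fin rk → ℕ)
    (hcondN : ∀ a : Fin rk → PowerSeries k,
      (a ∈ 𝓝 ∧ ∀ f : PowerSeries k, f • a ∈ 𝓝) ↔ ∀ i, X ^ n i ∣ a i)
    (x : Fin rk → PowerSeries k) (hx : x ∈ 𝓝)
    (hvan : ∀ i t, t < n i → (n i - 1 - t) ∉ ValSet (R : Set (PowerSeries k)) →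
      PowerSeries.coeff t (x i) = 0) :
    ∀ i, X ^ n i ∣ x i := by
  classical
  by_contra hcon
  push_neg at hcon
  obtain ⟨i₀, hi₀⟩ := hcon
  rw [PowerSeries.X_pow_dvd_iff] at hi₀
  push_neg at hi₀
  -- finset of "bad" coordinate positions
  set B : ℕ := Finset.univ.sup n with hB
  set Fx : Finset (Fin rk × ℕ) :=
    (Finset.univ ×ˢ Finset.range (B + 1)).filter
      (fun p => p.2 < n p.1 ∧ PowerSeries.coeff p.2 (x p.1) ≠ 0) with hFx
  have hmemFx : ∀ (l : Fin rk) (b : ℕ), b < n l → PowerSeries.coeff b (x l) ≠ 0 →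
      (l, b) ∈ Fx := by
    intro l b hb hcb
    have hbB : b < B + 1 := by
      have : n l ≤ B := Finset.le_sup (Finset.mem_univ l)
      omega
    simp only [hFx, Finset.mem_filter, Finset.mem_product, Finset.mem_univ,
      Finset.mem_range, true_and]
    exact ⟨hbB, hb, hcb⟩
  have hne : Fx.Nonempty := by
    obtain ⟨t, ht, hct⟩ := hi₀
    exact ⟨(i₀, t), hmemFx i₀ t ht hct⟩
  obtain ⟨p₀, hp₀, hmin⟩ := Finset.exists_min_image Fx
    (fun p => (rk : ℤ) * p.2 + p.1.1 - rk * n p.1) hne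
  obtain ⟨i, t⟩ := p₀
  simp only [hFx, Finset.mem_filter] at hp₀
  obtain ⟨-, hti, hcti⟩ := hp₀
  -- minimality, restated
  have hmin' : ∀ (l : Fin rk) (b : ℕ), b < n l → PowerSeries.coeff b (x l) ≠ 0 →
      (rk : ℤ) * t + i - rk * n i ≤ (rk : ℤ) * b + l - rk * n l := by
    intro l b hb hcb
    exact hmin (l, b) (hmemFx l b hb hcb)
  -- the gap value is in the value semigroup
  have hγ : (n i - 1 - t) ∈ ValSet (R : Set (PowerSeries k)) := by
    by_contra hg
    exact hcti (hvan i t hti hg)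
  set γ : ℕ := n i - 1 - t with hγdef
  have hγt : t + γ + 1 = n i := by omega
  obtain ⟨r, hrR, hra, hrb⟩ := hγ
  set u : Fin rk → PowerSeries k := r • x with hu
  have hul : ∀ l, u l = r * x l := fun l => rfl
  have huN : u ∈ 𝓝 := hstabN r hrR x hx
  have hrkpos : 0 < rk := i.pos
  -- sub-claim (a): coeff t' (u l) = 0 whenever t' + 1 < n l
  have ha : ∀ (l : Fin rk) (t' : ℕ), t' + 1 < n l → PowerSeries.coeff t' (u l) = 0 := by
    intro l t' ht'
    rw [hul, PowerSeries.coeff_mul]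
    apply Finset.sum_eq_zero
    intro p hp
    rw [Finset.HasAntidiagonal.mem_antidiagonal] at hp
    rcases lt_or_ge p.1 γ with hlt | hge
    · rw [hrb p.1 hlt, zero_mul]
    · rcases eq_or_ne (PowerSeries.coeff p.2 (x l)) 0 with h0 | h0
      · rw [h0, mul_zero]
      · exfalso
        have hb : p.2 < n l := by omega
        have := hmin' l p.2 hb h0
        have hineq : (p.2 : ℤ) + n i + 1 ≤ (t : ℤ) + n l := by
          have h1 : (p.1 : ℤ) + p.2 = t' := by exact_mod_cast hp
          have h2 : (γ : ℤ) ≤ p.1 := by exact_mod_cast hge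
          have h3 : (t : ℤ) + γ + 1 = n i := by exact_mod_cast hγt
          have h4 : (t' : ℤ) + 1 < n l := by exact_mod_cast ht'
          linarith
        have hrk1 : (1 : ℤ) ≤ rk := by exact_mod_cast hrkpos
        have hmul := mul_le_mul_of_nonneg_left hineq (by linarith : (0:ℤ) ≤ (rk:ℤ))
        have hli : (l.1 : ℤ) < rk := by exact_mod_cast l.2
        have hipos : (0 : ℤ) ≤ (i.1 : ℤ) := by positivity
        nlinarith [this, hmul, hli, hipos]
  -- sub-claim (b): O · u ⊆ 𝓝
  have hb' : ∀ f : PowerSeries k, f • u ∈ 𝓝 := by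
    intro f
    set f₀ : k := PowerSeries.constantCoeff f with hf₀
    have hdvd : (X : PowerSeries k) ∣ (f - C f₀) := by
      rw [PowerSeries.X_dvd_iff, map_sub, PowerSeries.constantCoeff_C, sub_self]
    obtain ⟨g, hg⟩ := hdvd
    have hf : f = C f₀ + X * g := by rw [← hg]; ring
    have hXgu : (X * g) • u ∈ 𝓝 := by
      refine ((hcondN ((X * g) • u)).mpr ?_).1
      intro l
      have : (X : PowerSeries k) ^ n l ∣ X * u l := by
        rcases Nat.eq_zero_or_pos (n l) with h0 | h0
        · rw [h0, pow_zero]; exact one_dvd _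
        · obtain ⟨s, hs⟩ : ∃ s, n l = s + 1 := ⟨n l - 1, by omega⟩
          have hXs : (X : PowerSeries k) ^ s ∣ u l := by
            rw [PowerSeries.X_pow_dvd_iff]
            intro j hj
            exact ha l j (by omega)
          rw [hs, pow_succ, mul_comm ((X:PowerSeries k)^s) X]
          exact mul_dvd_mul_left X hXs
      have : (X : PowerSeries k) ^ n l ∣ X * g * u l := by
        calc (X : PowerSeries k) ^ n l ∣ X * u l := this
        _ ∣ X * g * u l := ⟨g, by ring⟩
      simpa using this
    have : f • u = f₀ • u + (X * g) • u := by
      rw [hf, add_smul]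
      congr 1
      rw [← algebraMap_smul (PowerSeries k) f₀ u]
      rfl
    rw [this]
    exact Submodule.add_mem 𝓝 (Submodule.smul_mem 𝓝 f₀ huN) hXgu
  -- hence u is in the conductor, so X^{n i} ∣ u i
  have hudvd : (X : PowerSeries k) ^ n i ∣ u i := (hcondN u).mp ⟨huN, hb'⟩ i
  have hcu : PowerSeries.coeff (n i - 1) (u i) = 0 :=
    PowerSeries.X_pow_dvd_iff.mp hudvd (n i - 1) (by omega)
  -- sub-claim (c): that coefficient is nonzero
  have hcu' : PowerSeries.coeff (n i - 1) (u i)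
      = PowerSeries.coeff γ r * PowerSeries.coeff t (x i) := by
    rw [hul, PowerSeries.coeff_mul]
    apply Finset.sum_eq_single (γ, t)
    · intro p hp hpne
      rw [Finset.HasAntidiagonal.mem_antidiagonal] at hp
      rcases lt_trichotomy p.1 γ with hlt | heq | hgt
      · rw [hrb p.1 hlt, zero_mul]
      · exfalso; apply hpne
        have : p.2 = t := by omega
        exact Prod.ext heq this
      · have hbt : p.2 < t := by omega
        rcases eq_or_ne (PowerSeries.coeff p.2 (x i)) 0 with h0 | h0
        · rw [h0, mul_zero]
        · exfalso
          have := hmin' i p.2 (by omega) h0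
          have hrk1 : (1 : ℤ) ≤ rk := by exact_mod_cast hrkpos
          have hbt' : (p.2 : ℤ) < t := by exact_mod_cast hbt
          nlinarith [this, hbt', hrk1]
    · intro habs
      exfalso
      exact habs (Finset.HasAntidiagonal.mem_antidiagonal.mpr (by omega))
  exact hcti (by
    have := hcu' ▸ hcu
    rcases mul_eq_zero.mp this with h | h
    · exact absurd h hra
    · exact h)

lemma part1_core (R : Subalgebra k (PowerSeries k)) (rk : ℕ)
    (𝓝 : Submodule k (Fin rk → PowerSeries k))
    (hstabN : ∀ r ∈ R, ∀ a ∈ 𝓝, r • a ∈ 𝓝)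
    (n : Fin rk → ℕ)
    (hcondN : ∀ a : Fin rk → PowerSeries k,
      (a ∈ 𝓝 ∧ ∀ f : PowerSeries k, f • a ∈ 𝓝) ↔ ∀ i, X ^ n i ∣ a i)
    {c₀ : ℕ} (hc₀ : ∀ n', c₀ ≤ n' → n' ∈ ValSet (R : Set (PowerSeries k)))
    (hnle : ∀ i, n i ≤ c₀) :
    ∑ i, n i ≤ Module.finrank k ((Fin rk → PowerSeries k) ⧸ 𝓝)
      + rk * ((ValSet (R : Set (PowerSeries k)))ᶜ).ncard := by
  classical
  set PP := Fin rk → PowerSeries k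
  -- the conductor submodule D
  set D : Submodule k PP :=
    { carrier := {x | ∀ i, (X : PowerSeries k) ^ n i ∣ x i}
      add_mem' := fun hx hy i => dvd_add (hx i) (hy i)
      zero_mem' := fun i => dvd_zero _
      smul_mem' := by
        intro c x hx i
        have : c • x i = C c * x i := PowerSeries.smul_eq_C_mul (x i) c
        show (X : PowerSeries k) ^ n i ∣ (c • x) i
        rw [Pi.smul_apply, this]
        exact Dvd.dvd.mul_left (hx i) _ } with hD
  have hDmem : ∀ x : PP, x ∈ D ↔ ∀ i, (X : PowerSeries k) ^ n i ∣ x i := fun x => Iff.rfl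
  have hDN : D ≤ 𝓝 := fun x hx => ((hcondN x).mpr hx).1
  -- q : PP → Π i, Fin (n i) → k  with kernel D
  set q : PP →ₗ[k] (∀ i : Fin rk, Fin (n i) → k) :=
    LinearMap.pi (fun i => LinearMap.pi
      (fun j : Fin (n i) => (PowerSeries.coeff (j : ℕ)).comp (LinearMap.proj i))) with hq
  have hqapp : ∀ (x : PP) (i : Fin rk) (j : Fin (n i)),
      q x i j = PowerSeries.coeff (j : ℕ) (x i) := fun x i j => rfl
  have hker : LinearMap.ker q = D := by
    ext x
    simp only [LinearMap.mem_ker, hDmem]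
    constructor
    · intro h i
      rw [PowerSeries.X_pow_dvd_iff]
      intro j hj
      have := congrFun (congrFun h i) ⟨j, hj⟩
      simpa [hqapp] using this
    · intro h
      funext i j
      have := PowerSeries.X_pow_dvd_iff.mp (h i) (j : ℕ) j.2
      simpa [hqapp] using this
  have hsurj : Function.Surjective q := by
    intro w
    refine ⟨fun i => ∑ j : Fin (n i), C (w i j) * X ^ (j : ℕ), ?_⟩
    funext i j
    rw [hqapp]
    rw [map_sum]
    rw [Finset.sum_eq_single j]
    · simp [PowerSeries.coeff_C_mul, PowerSeries.coeff_X_pow]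
    · intro j' _ hj'
      rw [PowerSeries.coeff_C_mul, PowerSeries.coeff_X_pow, if_neg, mul_zero]
      intro h
      exact hj' (Fin.ext h.symm)
    · intro h
      exact absurd (Finset.mem_univ j) h
  have e : (PP ⧸ D) ≃ₗ[k] (∀ i : Fin rk, Fin (n i) → k) :=
    hker ▸ LinearMap.quotKerEquivOfSurjective q hsurj
  have hfinD : FiniteDimensional k (PP ⧸ D) := Module.Finite.equiv e.symm
  have hfrD : Module.finrank k (PP ⧸ D) = ∑ i, n i := by
    rw [e.finrank_eq, Module.finrank_pi_fintype]
    congr 1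
    funext i
    rw [Module.finrank_pi, Fintype.card_fin]
  -- split the dimension
  set V : Submodule k (PP ⧸ D) := Submodule.map D.mkQ 𝓝 with hV
  have hsplit : Module.finrank k ((PP ⧸ D) ⧸ V) + Module.finrank k V
      = Module.finrank k (PP ⧸ D) := Submodule.finrank_quotient_add_finrank V
  have hqq : Module.finrank k ((PP ⧸ D) ⧸ V) = Module.finrank k (PP ⧸ 𝓝) :=
    (Submodule.quotientQuotientEquivQuotient D 𝓝 hDN).finrank_eq
  -- the gap finset
  set G : Finset (Fin rk × ℕ) :=
    (Finset.univ ×ˢ Finset.range c₀).filter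
      (fun p => p.2 < n p.1 ∧ (n p.1 - 1 - p.2) ∉ ValSet (R : Set (PowerSeries k))) with hG
  -- Θ and its descent
  set Θ : PP →ₗ[k] (G → k) :=
    LinearMap.pi (fun p => (PowerSeries.coeff (p : Fin rk × ℕ).2).comp
      (LinearMap.proj (p : Fin rk × ℕ).1)) with hΘ
  have hΘapp : ∀ (x : PP) (p : G), Θ x p = PowerSeries.coeff (p : Fin rk × ℕ).2
      (x (p : Fin rk × ℕ).1) := fun x p => rfl
  have hΘD : D ≤ LinearMap.ker Θ := by
    intro x hx
    rw [LinearMap.mem_ker]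
    funext p
    obtain ⟨⟨i, t⟩, hp⟩ := p
    simp only [hG, Finset.mem_filter] at hp
    rw [hΘapp]
    exact PowerSeries.X_pow_dvd_iff.mp ((hDmem x).mp hx i) t hp.2.1
  set Θbar : (PP ⧸ D) →ₗ[k] (G → k) := D.liftQ Θ hΘD with hΘbar
  have hVinj : Function.Injective (Θbar.comp V.subtype) := by
    rw [← LinearMap.ker_eq_bot]
    rw [LinearMap.ker_eq_bot']
    intro v hv
    obtain ⟨v, hvV⟩ := v
    obtain ⟨x, hxN, hxv⟩ := hvV
    have hΘx : Θ x = 0 := by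
      have h1 : Θbar.comp V.subtype ⟨v, ⟨x, hxN, hxv⟩⟩ = Θbar v := rfl
      rw [h1] at hv
      rw [← hxv] at hv
      have : D.mkQ x = Submodule.Quotient.mk x := rfl
      rw [this, Submodule.liftQ_apply] at hv
      exact hv
    have hxD : x ∈ D := by
      rw [hDmem]
      apply key_claim R rk 𝓝 hstabN n hcondN x hxN
      intro i t ht hgap
      have hpG : (i, t) ∈ G := by
        simp only [hG, Finset.mem_filter, Finset.mem_product, Finset.mem_univ,
          Finset.mem_range, true_and]
        exact ⟨lt_of_lt_of_le ht (hnle i), ht, hgap⟩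
      have := congrFun hΘx ⟨(i, t), hpG⟩
      simpa [hΘapp] using this
    apply Subtype.ext
    show v = 0
    rw [← hxv]
    have : D.mkQ x = Submodule.Quotient.mk x := rfl
    rw [this, Submodule.Quotient.mk_eq_zero]
    exact hxD
  have hVle : Module.finrank k V ≤ G.card := by
    have := LinearMap.finrank_le_finrank_of_injective hVinj
    rwa [Module.finrank_pi, Fintype.card_coe] at this
  -- counting the gaps
  have hgapfin : ((ValSet (R : Set (PowerSeries k)))ᶜ).Finite := by
    apply Set.Finite.subset (Set.finite_Iio c₀)
    intro x hx
    simp only [Set.mem_compl_iff] at hx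
    by_contra h
    exact hx (hc₀ x (by simpa using h))
  have hGcard : G.card ≤ rk * ((ValSet (R : Set (PowerSeries k)))ᶜ).ncard := by
    rw [Set.ncard_eq_toFinset_card _ hgapfin]
    have := Finset.card_le_card_of_injOn
      (fun p : Fin rk × ℕ => (p.1, n p.1 - 1 - p.2))
      (s := G) (t := Finset.univ ×ˢ hgapfin.toFinset) ?_ ?_
    · calc G.card ≤ (Finset.univ ×ˢ hgapfin.toFinset).card := this
        _ = rk * (hgapfin.toFinset).card := by
            rw [Finset.card_product, Finset.card_univ, Fintype.card_fin]
    · intro p hp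
      replace hp : p ∈ G := hp
      simp only [hG, Finset.mem_filter, Finset.mem_product, Finset.mem_univ,
        Finset.mem_range, true_and] at hp
      simp only [Finset.mem_coe, Finset.mem_product, Finset.mem_univ, true_and, Set.Finite.mem_toFinset,
        Set.mem_compl_iff]
      exact hp.2.2
    · intro p hp p' hp' heq
      simp only [hG, Finset.coe_filter, Set.mem_setOf_eq] at hp hp'
      have hp2 : p.2 < n p.1 := hp.2.1
      have hp2' : p'.2 < n p'.1 := hp'.2.1
      have h1 : p.1 = p'.1 := (Prod.ext_iff.mp heq).1
      have h2 : n p.1 - 1 - p.2 = n p'.1 - 1 - p'.2 := (Prod.ext_iff.mp heq).2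
      rw [← h1] at h2 hp2'
      have : p.2 = p'.2 := by omega
      exact Prod.ext h1 this
  have hqq' : Module.finrank k (PP ⧸ 𝓝)
      = Module.finrank k ((Fin rk → PowerSeries k) ⧸ 𝓝) := rfl
  omega

end AuxLemmas

/-- Assume `Γ = ν(R \ {0})` is symmetric, i.e. `c = 2δ`.  Let
`𝓜 ⊆ O^{rk}` be a standard `R`-submodule with `dev(𝓜) = rk·δ - dim_k(O^{rk}/𝓜)`, and
suppose its conductor `C(𝓜) = {y ∈ 𝓜 | O·y ⊆ 𝓜}` equals `⊕_i z^{n_i}·O·ε'_i` for an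
`O`-basis `(ε'_i)` of `O^{rk}` and `n_0 ≤ … ≤ n_{rk-1}`.  Then
`rk·c ≥ dev(𝓜) + Σ_i n_i`, and `n_i ≤ c` for every `i`. -/
theorem higher_rank_conductor_inequality
    {k : Type*} [Field k]
    (R : Subalgebra k (PowerSeries k)) (m : ℕ) (hm : 1 ≤ m)
    (hRm : ∀ f : PowerSeries k, PowerSeries.X ^ m * f ∈ R)
    (hsym : sInf {c : ℕ | ∀ n', c ≤ n' → n' ∈ ValSet (R : Set (PowerSeries k))}
        = 2 * ((ValSet (R : Set (PowerSeries k)))ᶜ).ncard)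
    (rk : ℕ) (hrk : 1 ≤ rk)
    (𝓜 : Submodule k (Fin rk → PowerSeries k))
    (hstab : ∀ r ∈ R, ∀ y ∈ 𝓜, (fun i => r * y i) ∈ 𝓜)
    (hstd : Submodule.span (PowerSeries k) (𝓜 : Set (Fin rk → PowerSeries k)) = ⊤)
    (ε' : Fin rk → (Fin rk → PowerSeries k))
    (hbasis : Function.Bijective
      (fun a : Fin rk → PowerSeries k => ∑ i : Fin rk, a i • ε' i))
    (n : Fin rk → ℕ) (hmono : Monotone n)
    (hcond : ∀ y : Fin rk → PowerSeries k,
      (y ∈ 𝓜 ∧ ∀ f : PowerSeries k, (fun j => f * y j) ∈ 𝓜) ↔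
        ∃ b : Fin rk → PowerSeries k,
          y = ∑ i : Fin rk, (PowerSeries.X ^ n i * b i) • ε' i) :
    (((rk : ℤ) * ((ValSet (R : Set (PowerSeries k)))ᶜ).ncard
          - (Module.finrank k ((Fin rk → PowerSeries k) ⧸ 𝓜) : ℤ))
        + ∑ i : Fin rk, (n i : ℤ))
      ≤ (rk : ℤ)
          * (sInf {c : ℕ | ∀ n', c ≤ n' → n' ∈ ValSet (R : Set (PowerSeries k))} : ℕ) ∧
    ∀ i : Fin rk,
      n i ≤ sInf {c : ℕ | ∀ n', c ≤ n' → n' ∈ ValSet (R : Set (PowerSeries k))} := by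
  classical
  set cset : Set ℕ := {c : ℕ | ∀ n', c ≤ n' → n' ∈ ValSet (R : Set (PowerSeries k))}
    with hcset
  have hmcset : m ∈ cset := fun n' hn' => valset_of_pow_mem R hRm hn'
  set c₀ : ℕ := sInf cset with hc₀def
  have hc₀ : ∀ n', c₀ ≤ n' → n' ∈ ValSet (R : Set (PowerSeries k)) :=
    Nat.sInf_mem (⟨m, hmcset⟩ : cset.Nonempty)
  have hc₀m : c₀ ≤ m := Nat.sInf_le hmcset
  have hXc : ∀ f : PowerSeries k, X ^ c₀ * f ∈ R :=
    conductor_pow_mul_mem R hc₀ hc₀m hRm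
  -- z^{c₀} O ⊆ conductor of 𝓜
  have hfull : ∀ (v : Fin rk → PowerSeries k) (f : PowerSeries k),
      ((X : PowerSeries k) ^ c₀ * f) • v ∈ 𝓜 := by
    set T : Submodule (PowerSeries k) (Fin rk → PowerSeries k) :=
      { carrier := {v | ∀ f : PowerSeries k, ((X : PowerSeries k) ^ c₀ * f) • v ∈ 𝓜}
        add_mem' := by
          intro a b ha hb f
          rw [smul_add]
          exact Submodule.add_mem 𝓜 (ha f) (hb f)
        zero_mem' := by
          intro f
          rw [smul_zero]
          exact Submodule.zero_mem 𝓜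
        smul_mem' := by
          intro g v hv f
          rw [smul_smul]
          have : (X : PowerSeries k) ^ c₀ * f * g = X ^ c₀ * (f * g) := by ring
          rw [this]
          exact hv (f * g) } with hT
    have hsub : (𝓜 : Set (Fin rk → PowerSeries k)) ⊆ T := by
      intro y hy f
      have := hstab (X ^ c₀ * f) (hXc f) y hy
      have heq : (fun i => (X ^ c₀ * f) * y i) = ((X : PowerSeries k) ^ c₀ * f) • y := by
        funext i; rfl
      rwa [heq] at this
    have : (⊤ : Submodule (PowerSeries k) (Fin rk → PowerSeries k)) ≤ T := by
      rw [← hstd]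
      exact Submodule.span_le.mpr hsub
    intro v f
    exact this (Submodule.mem_top) f
  -- Part 2 : n i ≤ c₀
  have hnle : ∀ i, n i ≤ c₀ := by
    intro i
    have hy1 : ((X : PowerSeries k) ^ c₀) • ε' i ∈ 𝓜 := by
      have := hfull (ε' i) 1
      rwa [mul_one] at this
    have hy2 : ∀ f : PowerSeries k,
        (fun j => f * (((X : PowerSeries k) ^ c₀) • ε' i) j) ∈ 𝓜 := by
      intro f
      have heq : (fun j => f * (((X : PowerSeries k) ^ c₀) • ε' i) j)
          = ((X : PowerSeries k) ^ c₀ * f) • ε' i := by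
        funext j
        show f * (X ^ c₀ * ε' i j) = (X ^ c₀ * f) * ε' i j
        ring
      rw [heq]
      exact hfull (ε' i) f
    obtain ⟨b, hb⟩ := (hcond _).mp ⟨hy1, hy2⟩
    have hsingle : (∑ j : Fin rk, ((Pi.single i ((X : PowerSeries k) ^ c₀) : Fin rk → PowerSeries k) j) • ε' j)
        = ((X : PowerSeries k) ^ c₀) • ε' i := by
      rw [Finset.sum_eq_single i]
      · rw [Pi.single_eq_same]
      · intro j _ hj
        rw [Pi.single_eq_of_ne hj, zero_smul]
      · intro h; exact absurd (Finset.mem_univ i) h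
    have hinj := hbasis.injective
      (a₁ := (Pi.single i ((X : PowerSeries k) ^ c₀) : Fin rk → PowerSeries k))
      (a₂ := fun j => X ^ n j * b j)
      (by rw [hsingle, hb])
    have hXeq : (X : PowerSeries k) ^ c₀ = X ^ n i * b i := by
      have := congrFun hinj i
      rwa [Pi.single_eq_same] at this
    by_contra hlt
    push_neg at hlt
    have h0 : PowerSeries.coeff c₀ ((X : PowerSeries k) ^ n i * b i) = 0 := by
      apply PowerSeries.X_pow_dvd_iff.mp (dvd_mul_right _ _) c₀ hlt
    rw [← hXeq, PowerSeries.coeff_X_pow, if_pos rfl] at h0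
    exact one_ne_zero h0
  refine ⟨?_, hnle⟩
  -- transport 𝓜 along the basis
  set F : (Fin rk → PowerSeries k) →ₗ[PowerSeries k] (Fin rk → PowerSeries k) :=
    ∑ i : Fin rk, (LinearMap.proj i).smulRight (ε' i) with hF
  have hFapp : ∀ a, F a = ∑ i : Fin rk, a i • ε' i := by
    intro a
    simp [hF, LinearMap.sum_apply, LinearMap.smulRight_apply]
  have hFbij : Function.Bijective F := by
    have : ⇑F = fun a : Fin rk → PowerSeries k => ∑ i : Fin rk, a i • ε' i :=
      funext hFapp
    rw [this]; exact hbasis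
  set Φ : (Fin rk → PowerSeries k) ≃ₗ[PowerSeries k] (Fin rk → PowerSeries k) :=
    LinearEquiv.ofBijective F hFbij with hΦ
  set Φk : (Fin rk → PowerSeries k) ≃ₗ[k] (Fin rk → PowerSeries k) :=
    Φ.restrictScalars k with hΦk
  set 𝓝 : Submodule k (Fin rk → PowerSeries k) := 𝓜.comap Φk.toLinearMap with h𝓝
  have hΦkapp : ∀ a, Φk a = F a := fun a => rfl
  have hmemN : ∀ a, a ∈ 𝓝 ↔ F a ∈ 𝓜 := fun a => Iff.rfl
  have hFsmul : ∀ (r : PowerSeries k) (a : Fin rk → PowerSeries k),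
      F (r • a) = fun i => r * F a i := by
    intro r a
    have : F (r • a) = r • F a := map_smul F r a
    rw [this]
    funext i
    rfl
  have hstabN : ∀ r ∈ R, ∀ a ∈ 𝓝, r • a ∈ 𝓝 := by
    intro r hr a ha
    rw [hmemN, hFsmul]
    exact hstab r hr (F a) ((hmemN a).mp ha)
  have hcondN : ∀ a : Fin rk → PowerSeries k,
      (a ∈ 𝓝 ∧ ∀ f : PowerSeries k, f • a ∈ 𝓝) ↔ ∀ i, X ^ n i ∣ a i := by
    intro a
    have h1 : (a ∈ 𝓝 ∧ ∀ f : PowerSeries k, f • a ∈ 𝓝)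
        ↔ (F a ∈ 𝓜 ∧ ∀ f : PowerSeries k, (fun j => f * F a j) ∈ 𝓜) := by
      constructor
      · rintro ⟨h, hf⟩
        refine ⟨(hmemN a).mp h, fun f => ?_⟩
        have := (hmemN _).mp (hf f)
        rwa [hFsmul] at this
      · rintro ⟨h, hf⟩
        refine ⟨(hmemN a).mpr h, fun f => ?_⟩
        rw [hmemN, hFsmul]
        exact hf f
    rw [h1, hcond (F a)]
    constructor
    · rintro ⟨b, hb⟩
      have : F a = F (fun i => X ^ n i * b i) := by
        rw [hb, hFapp]
      have ha := hFbij.injective this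
      intro i
      exact ⟨b i, congrFun ha i⟩
    · intro h
      choose b hb using h
      refine ⟨b, ?_⟩
      rw [← hFapp]
      congr 1
      funext i
      exact hb i
  have hquot : ((Fin rk → PowerSeries k) ⧸ 𝓝) ≃ₗ[k] ((Fin rk → PowerSeries k) ⧸ 𝓜) :=
    Submodule.Quotient.equiv 𝓝 𝓜 Φk
      (Submodule.map_comap_eq_of_surjective Φk.surjective 𝓜)
  have hfr : Module.finrank k ((Fin rk → PowerSeries k) ⧸ 𝓝)
      = Module.finrank k ((Fin rk → PowerSeries k) ⧸ 𝓜) := hquot.finrank_eq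
  have hmain := part1_core R rk 𝓝 hstabN n hcondN hc₀ hnle
  rw [hfr] at hmain
  -- final arithmetic
  have hsym' : (c₀ : ℤ) = 2 * ((ValSet (R : Set (PowerSeries k)))ᶜ).ncard := by
    exact_mod_cast hsym
  have hcast : (∑ i : Fin rk, (n i : ℤ)) = ((∑ i, n i : ℕ) : ℤ) := by
    push_cast; rfl
  rw [hcast]
  have hmain' : ((∑ i, n i : ℕ) : ℤ)
      ≤ (Module.finrank k ((Fin rk → PowerSeries k) ⧸ 𝓜) : ℤ)
        + (rk : ℤ) * ((ValSet (R : Set (PowerSeries k)))ᶜ).ncard := by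
    exact_mod_cast hmain
  rw [hsym']
  ring_nf
  ring_nf at hmain'
  linarith
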